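/- Let p be an odd prime and a, b units in Z/pZ with 4a + b² ≡ 0 (mod p). Define φ(x) = a x⁻¹ + b for x ≠ 0 and φ(0) = b. Then the functional graph of φ on Z/pZ is exactly one fixed point (namely α = b/2) together with a single cycle through all remaining p - 1 elements; equivalently, φ restricted to Z/pZ \ {α} is a cyclic permutation of order p - 1. -/

import Mathlib

/-- The "skip over zero" translation map on `ZMod p`. -/
private def skipMap {p : ℕ} (c : ZMod p) (u : ZMod p) : ZMod p :=
  if u + c = 0 then u + 2 * c else u + c

private lemma natCast_inj_of_lt {p : ℕ} (i j : ℕ) (hi : i < p) (hj : j < p)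
    (h : (i : ZMod p) = j) : i = j := by
  haveI : NeZero p := ⟨by omega⟩
  have h2 := (ZMod.natCast_eq_natCast_iff' i j p).mp h
  rwa [Nat.mod_eq_of_lt hi, Nat.mod_eq_of_lt hj] at h2

private lemma skip_iter_eq {p : ℕ} (c u : ZMod p) (n : ℕ)
    (h : ∀ j : ℕ, 1 ≤ j → j ≤ n → u + (j : ZMod p) * c ≠ 0) :
    (skipMap c)^[n] u = u + (n : ZMod p) * c := by
  induction n with
  | zero => simp
  | succ n ih =>
    rw [Function.iterate_succ_apply',
      ih (fun j h1 h2 => h j h1 (h2.trans (Nat.le_succ n)))]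
    have h' : u + (n : ZMod p) * c + c ≠ 0 := by
      have hh := h (n + 1) (by omega) le_rfl
      intro hc; apply hh; push_cast; linear_combination hc
    rw [skipMap, if_neg h']
    push_cast; ring

private lemma skip_covers {p : ℕ} [Fact p.Prime] (c : ZMod p) (hc : c ≠ 0)
    (u v : ZMod p) (hu : u ≠ 0) (hv : v ≠ 0) :
    ∃ n, (skipMap c)^[n] u = v := by
  have hp0 : 0 < p := (Fact.out : p.Prime).pos
  set m := ((v - u) * c⁻¹).val with hm
  have hmp : m < p := ZMod.val_lt _
  have hmc : u + (m : ZMod p) * c = v := by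
    rw [hm, ZMod.natCast_val, ZMod.cast_id, mul_assoc, inv_mul_cancel₀ hc, mul_one]
    ring
  by_cases hall : ∀ j : ℕ, 1 ≤ j → j ≤ m → u + (j : ZMod p) * c ≠ 0
  · exact ⟨m, by rw [skip_iter_eq c u m hall, hmc]⟩
  · push_neg at hall
    obtain ⟨j₀, hj1, hj2, hj0⟩ := hall
    have hj0m : j₀ ≠ m := by
      intro he; subst he; rw [hmc] at hj0; exact hv hj0
    have hj0lt : j₀ < m := lt_of_le_of_ne hj2 hj0m
    have huniq : ∀ j : ℕ, j ≤ m → u + (j : ZMod p) * c = 0 → j = j₀ := by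
      intro j hjm hj
      have h1 : ((j : ZMod p)) * c = ((j₀ : ZMod p)) * c := by
        linear_combination hj - hj0
      exact natCast_inj_of_lt j j₀ (by omega) (by omega) (mul_right_cancel₀ hc h1)
    refine ⟨m - 1, ?_⟩
    have e1 : (skipMap c)^[j₀ - 1] u = u + ((j₀ - 1 : ℕ) : ZMod p) * c :=
      skip_iter_eq c u (j₀ - 1) (fun j hj1' hj2' h0 => by
        have := huniq j (by omega) h0; omega)
    have e2 : skipMap c (u + ((j₀ - 1 : ℕ) : ZMod p) * c)
        = u + ((j₀ + 1 : ℕ) : ZMod p) * c := by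
      have hcast : ((j₀ - 1 : ℕ) : ZMod p) = (j₀ : ZMod p) - 1 := by
        rw [Nat.cast_sub hj1]; norm_num
      have hcond : u + ((j₀ - 1 : ℕ) : ZMod p) * c + c = 0 := by
        rw [hcast]; linear_combination hj0
      rw [skipMap, if_pos hcond, hcast]
      push_cast; ring
    have e3 : (skipMap c)^[m - 1 - j₀] (u + ((j₀ + 1 : ℕ) : ZMod p) * c) = v := by
      have hiter := skip_iter_eq c (u + ((j₀ + 1 : ℕ) : ZMod p) * c) (m - 1 - j₀)
        (fun j hj1' hj2' => by
          intro h0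
          have h0' : u + ((j₀ + 1 + j : ℕ) : ZMod p) * c = 0 := by
            push_cast at h0 ⊢; linear_combination h0
          have := huniq (j₀ + 1 + j) (by omega) h0'
          omega)
      rw [hiter, ← hmc]
      have hcast : ((m - 1 - j₀ : ℕ) : ZMod p)
          = (m : ZMod p) - 1 - (j₀ : ZMod p) := by
        rw [Nat.cast_sub (by omega : j₀ ≤ m - 1), Nat.cast_sub (by omega : 1 ≤ m)]
        norm_num
      rw [hcast]
      push_cast; ring
    have hsplit : m - 1 = (m - 1 - j₀) + 1 + (j₀ - 1) := by omega
    rw [hsplit, Function.iterate_add_apply, Function.iterate_add_apply,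
        Function.iterate_one, e1, e2, e3]

/-- For `a, b` units in `Z/pZ` with `4a + b² = 0`, the inversive map has the
single fixed point `α = b/2`, and `φ` restricted to the remaining `p - 1`
elements is a single cycle: the orbit of any `x ≠ α` visits every `y ≠ α`. -/
theorem stmt18 (p : ℕ) (hp : p.Prime) (hp2 : p ≠ 2)
    (a b : ZMod p) (ha : IsUnit a) (hb : IsUnit b)
    (hΔ : 4 * a + b ^ 2 = 0)
    (φ : ZMod p → ZMod p)
    (hφ : ∀ x, φ x = if x ≠ 0 then a * x⁻¹ + b else b) :
    φ (b * 2⁻¹) = b * 2⁻¹ ∧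
    (∀ x : ZMod p, φ x = x → x = b * 2⁻¹) ∧
    ∀ x y : ZMod p, x ≠ b * 2⁻¹ → y ≠ b * 2⁻¹ → ∃ n, φ^[n] x = y := by
  haveI : Fact p.Prime := ⟨hp⟩
  have h2 : (2 : ZMod p) ≠ 0 := by
    have h2' : ((2 : ℕ) : ZMod p) ≠ 0 := by
      rw [Ne, ZMod.natCast_eq_zero_iff]
      intro hdvd
      exact hp2 ((Nat.prime_dvd_prime_iff_eq hp Nat.prime_two).mp hdvd)
    simpa using h2'
  have hbne : b ≠ 0 := hb.ne_zero
  have hane : a ≠ 0 := ha.ne_zero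
  set α := b * 2⁻¹ with hαdef
  have hα : α ≠ 0 := mul_ne_zero hbne (inv_ne_zero h2)
  have hb' : b = 2 * α := by rw [hαdef]; field_simp
  have h4 : (4 : ZMod p) ≠ 0 := by
    have h44 : (4 : ZMod p) = 2 * 2 := by norm_num
    rw [h44]; exact mul_ne_zero h2 h2
  have ha' : a = -α ^ 2 := by
    apply mul_left_cancel₀ h4
    rw [hb'] at hΔ
    linear_combination hΔ
  have hfix : φ α = α := by
    rw [hφ α, if_pos hα, ha', hb']
    field_simp
    ring
  have uniq : ∀ x : ZMod p, φ x = x → x = α := by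
    intro x hfx
    by_cases hx0 : x = 0
    · subst hx0
      rw [hφ, if_neg (by simp)] at hfx
      exact absurd hfx hbne
    · rw [hφ, if_pos hx0] at hfx
      have hxx : a = x * (x - b) := by
        field_simp at hfx
        linear_combination hfx
      have hsq : (x - α) ^ 2 = 0 := by
        linear_combination -hxx + ha' + x * hb'
      have h0 : x - α = 0 := (pow_eq_zero_iff (by norm_num : (2:ℕ) ≠ 0)).mp hsq
      exact sub_eq_zero.mp h0
  have core : ∀ x, x ≠ α → φ x ≠ α ∧ (φ x - α)⁻¹ = skipMap α⁻¹ ((x - α)⁻¹) := by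
    intro x hx
    by_cases hx0 : x = 0
    · subst hx0
      rw [hφ, if_neg (by simp)]
      constructor
      · rw [hb']; intro h; apply hα; linear_combination h
      · have h1 : (0 - α)⁻¹ = -α⁻¹ := by rw [zero_sub, inv_neg]
        rw [hb', h1, skipMap, if_pos (by ring)]
        have h2a : 2 * α - α = α := by ring
        rw [h2a]; ring
    · rw [hφ, if_pos hx0]
      have hxα : x - α ≠ 0 := sub_ne_zero.mpr hx
      have key : a * x⁻¹ + b - α = α * x⁻¹ * (x - α) := by
        rw [ha', hb']; field_simp; ring
      have hne : a * x⁻¹ + b - α ≠ 0 := by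
        rw [key]; exact mul_ne_zero (mul_ne_zero hα (inv_ne_zero hx0)) hxα
      constructor
      · exact fun h => hne (by rw [h]; ring)
      · have hsum : (x - α)⁻¹ + α⁻¹ = α⁻¹ * x * (x - α)⁻¹ := by
          field_simp
          ring
        have hsumne : (x - α)⁻¹ + α⁻¹ ≠ 0 := by
          rw [hsum]
          exact mul_ne_zero (mul_ne_zero (inv_ne_zero hα) hx0) (inv_ne_zero hxα)
        rw [skipMap, if_neg hsumne, key, hsum, mul_inv, mul_inv, inv_inv]
  have iter : ∀ n (x : ZMod p), x ≠ α → φ^[n] x ≠ α ∧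
      (φ^[n] x - α)⁻¹ = (skipMap α⁻¹)^[n] ((x - α)⁻¹) := by
    intro n
    induction n with
    | zero => intro x hx; exact ⟨hx, rfl⟩
    | succ n ih =>
      intro x hx
      obtain ⟨h1, h2'⟩ := ih x hx
      obtain ⟨h3, h4'⟩ := core (φ^[n] x) h1
      rw [Function.iterate_succ_apply']
      exact ⟨h3, by rw [h4', h2']; exact (Function.iterate_succ_apply' _ n _).symm⟩
  refine ⟨hfix, uniq, ?_⟩
  intro x y hx hy
  have hux : (x - α)⁻¹ ≠ 0 := inv_ne_zero (sub_ne_zero.mpr hx)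
  have huy : (y - α)⁻¹ ≠ 0 := inv_ne_zero (sub_ne_zero.mpr hy)
  obtain ⟨n, hn⟩ := skip_covers α⁻¹ (inv_ne_zero hα) _ _ hux huy
  refine ⟨n, ?_⟩
  have h5 := (iter n x hx).2
  rw [hn] at h5
  exact sub_left_inj.mp (inv_injective h5)
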